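/- If a configuration η is stabilizable in a finite set V by some acceptable sequence of topplings, then there exists a sequence of topplings contained in V that is both legal for η and stabilizes η in V. -/

import Mathlib

namespace ARW

/-- The state of a site: `nat n` means `n` active particles, `rho` means one passive particle. -/
inductive Nrho where
  | nat : ℕ → Nrho
  | rho : Nrho
deriving DecidableEq

namespace Nrho

/-- Numerical value used to define the order `0 < ρ < 1 < 2 < ⋯`. -/
def val : Nrho → ℚ
  | nat n => (n : ℚ)
  | rho => 1/2

instance : LE Nrho := ⟨fun a b => a.val ≤ b.val⟩
instance : LT Nrho := ⟨fun a b => a.val < b.val⟩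

/-- Adding one particle: `ρ + 1 = 2`. -/
def addOne : Nrho → Nrho
  | nat n => nat (n + 1)
  | rho => nat 2

/-- Removing one particle (junk value on `0`): `ρ - 1 = 0`. -/
def subOne : Nrho → Nrho
  | nat n => nat (n - 1)
  | rho => nat 0

/-- The sleep operation `n ↦ n·ρ`: `1·ρ = ρ`, `n·ρ = n` for `n ≥ 2`, `ρ·ρ = ρ`
(junk value on `0`). -/
def sleep : Nrho → Nrho
  | nat 0 => nat 0
  | nat 1 => rho
  | nat (n + 2) => nat (n + 2)
  | rho => rho

end Nrho

/-- An instruction at a site: jump to a given site, or fall asleep. -/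
inductive Instr (S : Type) where
  | jump : S → Instr S
  | sleep : Instr S
deriving DecidableEq

/-- A configuration of the activated random walk system. -/
abbrev Config (S : Type) := S → Nrho

/-- A field of instructions `(τ^{x,j})`. -/
abbrev IField (S : Type) := S → ℕ → Instr S

variable {S : Type} [DecidableEq S]

/-- Apply one instruction at site `x`. -/
def applyInstr : Instr S → S → Config S → Config S
  | .jump y, x, η =>
      let η' := Function.update η x (η x).subOne
      Function.update η' y (η' y).addOne
  | .sleep, x, η => Function.update η x (η x).sleep

/-- Topple site `x`: use the next unused instruction at `x` and increment the odometer. -/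
def topple (I : IField S) : Config S × (S → ℕ) → S → Config S × (S → ℕ)
  | (η, h), x => (applyInstr (I x (h x)) x η, Function.update h x (h x + 1))

/-- Topple a finite sequence of sites, in order. -/
def toppleSeq (I : IField S) : Config S × (S → ℕ) → List S → Config S × (S → ℕ)
  | s, [] => s
  | s, x :: α => toppleSeq I (topple I s x) α

/-- `Phi I η α` is the configuration `Φ_α η` obtained from `η` by toppling
the sequence `α` (starting with odometer `0`). -/
def Phi (I : IField S) (η : Config S) (α : List S) : Config S :=
  (toppleSeq I (η, fun _ => 0) α).1

/-- The sequence `α` is acceptable from the state `(η, h)`: each toppled site has value `≥ ρ`,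
i.e. different from `0`, when it is toppled. -/
def AcceptableFrom (I : IField S) : Config S × (S → ℕ) → List S → Prop
  | _, [] => True
  | (η, h), x :: α => η x ≠ Nrho.nat 0 ∧ AcceptableFrom I (topple I (η, h) x) α

/-- The sequence `α` is legal from the state `(η, h)`: each toppled site is unstable,
i.e. has value `≥ 1`, when it is toppled. -/
def LegalFrom (I : IField S) : Config S × (S → ℕ) → List S → Prop
  | _, [] => True
  | (η, h), x :: α => Nrho.nat 1 ≤ η x ∧ LegalFrom I (topple I (η, h) x) α

/-- `α` is an acceptable sequence of topplings for the configuration `η`. -/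
def Acceptable (I : IField S) (η : Config S) (α : List S) : Prop :=
  AcceptableFrom I (η, fun _ => 0) α

/-- `α` is a legal sequence of topplings for the configuration `η`. -/
def Legal (I : IField S) (η : Config S) (α : List S) : Prop :=
  LegalFrom I (η, fun _ => 0) α

/-- Site `x` is stable for `η` if it carries no active particle. -/
def Stable (η : Config S) (x : S) : Prop := η x ≤ Nrho.rho

/-- `η` is stable in `V` if every site of `V` is stable. -/
def StableIn (η : Config S) (V : Finset S) : Prop := ∀ x ∈ V, Stable η x

namespace ARW

variable {S : Type} [DecidableEq S]

lemma addOne_ne_zero (a : Nrho) : a.addOne ≠ Nrho.nat 0 := by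
  cases a <;> simp [Nrho.addOne]

lemma sub_add (a : Nrho) (h : a ≠ Nrho.nat 0) : a.subOne.addOne = a.addOne.subOne := by
  rcases a with (_|n) | _ <;> simp_all [Nrho.subOne, Nrho.addOne]

lemma sleep_add (a : Nrho) (h : a ≠ Nrho.nat 0) : a.sleep.addOne = a.addOne.sleep := by
  rcases a with (_|_|n) | _ <;> simp_all [Nrho.sleep, Nrho.addOne]

lemma one_le_addOne (a : Nrho) : Nrho.nat 1 ≤ a.addOne := by
  rcases a with n | _ <;> show (1:ℚ) ≤ _ <;> simp [Nrho.addOne, Nrho.val]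

lemma ne_zero_of_one_le {a : Nrho} (h : Nrho.nat 1 ≤ a) : a ≠ Nrho.nat 0 := by
  rintro rfl; exact absurd (show (1:ℚ) ≤ 0 from h) (by norm_num)

lemma one_le_of_not_stable {a : Nrho} (h : ¬ a ≤ Nrho.rho) : Nrho.nat 1 ≤ a := by
  rcases a with n | _
  · show (1:ℚ) ≤ (n:ℚ)
    have h' : ¬ ((n:ℚ) ≤ 1/2) := h
    have : 1 ≤ n := by by_contra hn; push_neg at hn; interval_cases n; simp_all [Nrho.val]
    exact_mod_cast this
  · exact absurd (le_refl (Nrho.rho.val)) h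

/-- Modify the value at one site. -/
def modify (η : Config S) (x : S) (f : Nrho → Nrho) : Config S :=
  Function.update η x (f (η x))

lemma modify_comm {x y : S} (h : x ≠ y) (η : Config S) (f g : Nrho → Nrho) :
    modify (modify η x f) y g = modify (modify η y g) x f := by
  funext z
  simp only [modify, Function.update_apply]
  split_ifs <;> simp_all

lemma modify_modify_self (η : Config S) (x : S) (f g : Nrho → Nrho) :
    modify (modify η x f) x g = modify η x (g ∘ f) := by
  funext z
  simp only [modify, Function.update_apply, Function.comp]
  split_ifs <;> simp_all

lemma applyInstr_jump (a x : S) (η : Config S) :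
    applyInstr (.jump a) x η = modify (modify η x .subOne) a .addOne := rfl

lemma applyInstr_sleep (x : S) (η : Config S) :
    applyInstr .sleep x η = modify η x .sleep := rfl

lemma applyInstr_comm {x y : S} (hxy : x ≠ y) (i j : Instr S) (η : Config S)
    (hx : η x ≠ Nrho.nat 0) (hy : η y ≠ Nrho.nat 0) :
    applyInstr j y (applyInstr i x η) = applyInstr i x (applyInstr j y η) := by
  cases i <;> cases j <;>
    simp only [applyInstr_jump, applyInstr_sleep] <;>
    · funext z
      simp only [modify, Function.update_apply]
      split_ifs <;> subst_vars <;>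
        simp_all [sub_add _ hx, sub_add _ hy, sleep_add _ hx, sleep_add _ hy, addOne_ne_zero]

variable (I : IField S)

lemma apply_persist (i : Instr S) (x z : S) (η : Config S) (hzx : z ≠ x) :
    applyInstr i x η z = η z ∨ applyInstr i x η z = (η z).addOne := by
  cases i with
  | jump a =>
    by_cases hza : z = a
    · subst hza
      right; simp [applyInstr_jump, modify, Function.update_apply, hzx]
    · left; simp [applyInstr_jump, modify, Function.update_apply, hzx, hza]
  | sleep => left; simp [applyInstr_sleep, modify, Function.update_apply, hzx]

lemma ne_zero_persist (i : Instr S) (x z : S) (η : Config S) (hzx : z ≠ x)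
    (h : η z ≠ Nrho.nat 0) : applyInstr i x η z ≠ Nrho.nat 0 := by
  rcases apply_persist i x z η hzx with h' | h' <;> rw [h']
  · exact h
  · exact addOne_ne_zero _

lemma one_le_persist (i : Instr S) (x z : S) (η : Config S) (hzx : z ≠ x)
    (h : Nrho.nat 1 ≤ η z) : Nrho.nat 1 ≤ applyInstr i x η z := by
  rcases apply_persist i x z η hzx with h' | h' <;> rw [h']
  · exact h
  · exact one_le_addOne _

lemma topple_fst (s : Config S × (S → ℕ)) (x : S) :
    (topple I s x).1 = applyInstr (I x (s.2 x)) x s.1 := rfl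

lemma topple_comm {x y : S} (hxy : x ≠ y) (s : Config S × (S → ℕ))
    (hx : s.1 x ≠ Nrho.nat 0) (hy : s.1 y ≠ Nrho.nat 0) :
    topple I (topple I s x) y = topple I (topple I s y) x := by
  obtain ⟨η, h⟩ := s
  simp only [topple]
  have h1 : Function.update h x (h x + 1) y = h y := Function.update_of_ne (Ne.symm hxy) _ _
  have h2 : Function.update h y (h y + 1) x = h x := Function.update_of_ne hxy _ _
  rw [h1, h2, applyInstr_comm hxy _ _ _ hx hy, Function.update_comm hxy]

lemma one_le_seq (α : List S) (s : Config S × (S → ℕ)) (x : S) (hx : x ∉ α)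
    (h1 : Nrho.nat 1 ≤ s.1 x) : Nrho.nat 1 ≤ (toppleSeq I s α).1 x := by
  induction α generalizing s with
  | nil => exact h1
  | cons y α ih =>
    have hxy : x ≠ y := fun h => hx (h ▸ (List.mem_cons_self : y ∈ y :: α))
    have hxα : x ∉ α := fun h => hx (List.mem_cons_of_mem _ h)
    exact ih (topple I s y) hxα (by rw [topple_fst]; exact one_le_persist _ _ _ _ hxy h1)

lemma moveFront (x : S) (γ : List S) : ∀ (δ : List S) (s : Config S × (S → ℕ)),
    x ∉ γ → s.1 x ≠ Nrho.nat 0 → AcceptableFrom I s (γ ++ x :: δ) →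
    AcceptableFrom I s (x :: (γ ++ δ)) ∧
      toppleSeq I s (γ ++ x :: δ) = toppleSeq I s (x :: (γ ++ δ)) := by
  induction γ with
  | nil => intro δ s _ _ hacc; exact ⟨hacc, rfl⟩
  | cons y γ ih =>
    rintro δ ⟨η, h⟩ hxγ hx hacc
    have hxy : x ≠ y := fun h' => hxγ (h' ▸ (List.mem_cons_self : y ∈ y :: γ))
    have hxγ' : x ∉ γ := fun h' => hxγ (List.mem_cons_of_mem _ h')
    obtain ⟨hy, hacc'⟩ := hacc
    have hx' : (topple I (η, h) y).1 x ≠ Nrho.nat 0 := by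
      rw [topple_fst]; exact ne_zero_persist _ _ _ _ hxy hx
    obtain ⟨acc1, eq1⟩ := ih δ (topple I (η, h) y) hxγ' hx' hacc'
    obtain ⟨-, acc2⟩ := acc1
    have comm : topple I (topple I (η, h) x) y = topple I (topple I (η, h) y) x :=
      topple_comm I hxy (η, h) hx hy
    have hy' : (topple I (η, h) x).1 y ≠ Nrho.nat 0 := by
      rw [topple_fst]; exact ne_zero_persist _ _ _ _ (Ne.symm hxy) hy
    refine ⟨⟨hx, hy', ?_⟩, ?_⟩
    · show AcceptableFrom I (topple I (topple I (η, h) x) y) (γ ++ δ)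
      rw [comm]; exact acc2
    · show toppleSeq I (topple I (η, h) y) (γ ++ x :: δ)
          = toppleSeq I (topple I (topple I (η, h) x) y) (γ ++ δ)
      rw [eq1, comm]
      rfl

lemma exists_split_first {x : S} : ∀ {l : List S}, x ∈ l → ∃ γ δ, l = γ ++ x :: δ ∧ x ∉ γ := by
  intro l
  induction l with
  | nil => intro h; cases h
  | cons y l ih =>
    intro h
    by_cases hxy : x = y
    · subst hxy; exact ⟨[], l, rfl, by simp⟩
    · obtain ⟨γ, δ, rfl, hγ⟩ :=
        ih (by rcases List.mem_cons.mp h with h' | h'; exact absurd h' hxy; exact h')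
      exact ⟨y :: γ, δ, rfl, by simp [hγ, hxy]⟩

lemma main_lemma (V : Finset S) : ∀ (n : ℕ) (α : List S) (s : Config S × (S → ℕ)),
    α.length ≤ n → AcceptableFrom I s α → StableIn (toppleSeq I s α).1 V →
    ∃ β, LegalFrom I s β ∧ (∀ x ∈ β, x ∈ V) ∧ StableIn (toppleSeq I s β).1 V := by
  intro n
  induction n with
  | zero =>
    intro α s hlen hacc hst
    obtain rfl : α = [] := List.eq_nil_of_length_eq_zero (Nat.le_zero.mp hlen)
    exact ⟨[], trivial, by simp, hst⟩
  | succ n ih =>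
    rintro α ⟨η, h⟩ hlen hacc hst
    by_cases hS : StableIn η V
    · exact ⟨[], trivial, by simp, hS⟩
    · rw [StableIn] at hS
      push_neg at hS
      obtain ⟨x, hxV, hxst⟩ := hS
      have h1 : Nrho.nat 1 ≤ η x := one_le_of_not_stable hxst
      have hxα : x ∈ α := by
        by_contra hxa
        have hA : Nrho.nat 1 ≤ (toppleSeq I (η, h) α).1 x := one_le_seq I α (η, h) x hxa h1
        have hB := hst x hxV
        have hA' : (1 : ℚ) ≤ ((toppleSeq I (η, h) α).1 x).val := hA
        have hB' : ((toppleSeq I (η, h) α).1 x).val ≤ (1/2 : ℚ) := hB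
        linarith
      obtain ⟨γ, δ, rfl, hxγ⟩ := exists_split_first hxα
      have hx0 : η x ≠ Nrho.nat 0 := ne_zero_of_one_le h1
      obtain ⟨acc', seqeq⟩ := moveFront I x γ δ (η, h) hxγ hx0 hacc
      obtain ⟨-, acc2⟩ := acc'
      have hst2 : StableIn (toppleSeq I (topple I (η, h) x) (γ ++ δ)).1 V := by
        have e : toppleSeq I (η, h) (γ ++ x :: δ)
            = toppleSeq I (topple I (η, h) x) (γ ++ δ) := seqeq
        rw [e] at hst
        exact hst
      have hlen2 : (γ ++ δ).length ≤ n := by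
        simp only [List.length_append, List.length_cons] at hlen ⊢
        omega
      obtain ⟨β, hβleg, hβV, hβst⟩ := ih (γ ++ δ) (topple I (η, h) x) hlen2 acc2 hst2
      refine ⟨x :: β, ⟨h1, hβleg⟩, ?_, hβst⟩
      intro z hz
      rcases List.mem_cons.mp hz with rfl | hz'
      · exact hxV
      · exact hβV z hz'

end ARW

end ARW

open ARW in
/-- If `η` is stabilizable in the finite set `V` by some acceptable sequence of topplings,
then there is a sequence of topplings contained in `V` which is legal for `η`
and stabilizes `η` in `V`. -/
theorem exists_legal_stabilizing {S : Type} [DecidableEq S] (I : IField S) (η : Config S)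
    (V : Finset S) (α : List S)
    (hα : Acceptable I η α) (hstab : StableIn (Phi I η α) V) :
    ∃ β : List S, Legal I η β ∧ (∀ x ∈ β, x ∈ V) ∧ StableIn (Phi I η β) V := by
  exact ARW.main_lemma I V α.length α (η, fun _ => 0) le_rfl hα hstab
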